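/- Let d1, d2, T ≥ 1 and 0 ≤ h < T be integers, and let M₁,…,M_T ∈ ℝ^{d1×d2}. Then ‖(1/T)·Σ_{t=h+1}^{T} mat₁(M_{t−h} ⊗ M_t)‖₂² ≤ ‖(1/T)·Σ_{t=1}^{T} M_tM_tᵀ‖₂ · sup{ (1/T)·Σ_{t=1}^{T} ⟨W, M_t⟩_F² : W ∈ ℝ^{d1×d2}, ‖W‖_F ≤ 1 }. -/

import Mathlib

open Matrix

/-- The spectral norm (largest singular value) of a real matrix, i.e. the operator
norm of the associated linear map between Euclidean spaces. -/
noncomputable def specNorm {m n : Type*} [Fintype m] [Fintype n] [DecidableEq n]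
    (A : Matrix m n ℝ) : ℝ :=
  ‖LinearMap.toContinuousLinearMap (Matrix.toEuclideanLin A)‖

/-- The mode-1 matricization mat₁(A ⊗ B) of the order-4 tensor product of two matrices:
its rows are indexed by the row index of A, its columns by triples (j1, i2, j2), with
entries A i1 j1 * B i2 j2. -/
def mat1Kron {d1 d2 e1 e2 : ℕ} (A : Matrix (Fin d1) (Fin d2) ℝ)
    (B : Matrix (Fin e1) (Fin e2) ℝ) :
    Matrix (Fin d1) (Fin d2 × Fin e1 × Fin e2) ℝ :=
  fun i1 p => A i1 p.1 * B p.2.1 p.2.2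

/-- The Frobenius norm of a real matrix. -/
noncomputable def frobNorm {a b : Type*} [Fintype a] [Fintype b] (A : Matrix a b ℝ) : ℝ :=
  Real.sqrt (∑ i, ∑ j, (A i j) ^ 2)

/-- The Frobenius inner product ⟨A, B⟩_F = tr(AᵀB) of two real matrices. -/
def frobInner {a b : Type*} [Fintype a] [Fintype b] (A B : Matrix a b ℝ) : ℝ :=
  ∑ i, ∑ j, A i j * B i j

open Finset

lemma euc_norm_eq {n : Type*} [Fintype n] (y : n → ℝ) :
    ‖(WithLp.equiv 2 (n → ℝ)).symm y‖ = Real.sqrt (∑ j, (y j) ^ 2) := by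
  rw [EuclideanSpace.norm_eq]
  simp [Real.norm_eq_abs, sq_abs]

lemma specNorm_nonneg {m n : Type*} [Fintype m] [Fintype n] [DecidableEq n]
    (A : Matrix m n ℝ) : 0 ≤ specNorm A := norm_nonneg _

lemma specNorm_mulVec_le {m n : Type*} [Fintype m] [Fintype n] [DecidableEq n]
    (A : Matrix m n ℝ) (x : n → ℝ) :
    Real.sqrt (∑ i, (A.mulVec x i) ^ 2) ≤ specNorm A * Real.sqrt (∑ j, (x j) ^ 2) := by
  have h := (LinearMap.toContinuousLinearMap (Matrix.toEuclideanLin A)).le_opNorm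
    ((WithLp.equiv 2 (n → ℝ)).symm x)
  simpa [Matrix.toEuclideanLin_apply_piLp_toLp, euc_norm_eq, EuclideanSpace.norm_eq, Real.norm_eq_abs, sq_abs, specNorm] using h

lemma specNorm_le_bound {m n : Type*} [Fintype m] [Fintype n] [DecidableEq n]
    (A : Matrix m n ℝ) (C : ℝ) (hC : 0 ≤ C)
    (h : ∀ x : n → ℝ, Real.sqrt (∑ i, (A.mulVec x i) ^ 2) ≤ C * Real.sqrt (∑ j, (x j) ^ 2)) :
    specNorm A ≤ C := by
  apply ContinuousLinearMap.opNorm_le_bound _ hC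
  intro v
  have h2 := h ((WithLp.equiv 2 (n → ℝ)) v)
  have e1 : ‖v‖ = Real.sqrt (∑ j, ((WithLp.equiv 2 (n → ℝ)) v j) ^ 2) := by
    rw [EuclideanSpace.norm_eq]; simp [Real.norm_eq_abs, sq_abs]
  have e2 : (LinearMap.toContinuousLinearMap (Matrix.toEuclideanLin A)) v =
      (WithLp.equiv 2 (m → ℝ)).symm (A.mulVec ((WithLp.equiv 2 (n → ℝ)) v)) := by
    simp [Matrix.toEuclideanLin_apply]
  rw [e1, e2, euc_norm_eq]
  exact h2

lemma frobNorm_nonneg {a b : Type*} [Fintype a] [Fintype b] (A : Matrix a b ℝ) :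
    0 ≤ frobNorm A := Real.sqrt_nonneg _

lemma frobNorm_sq {a b : Type*} [Fintype a] [Fintype b] (A : Matrix a b ℝ) :
    frobNorm A ^ 2 = ∑ i, ∑ j, (A i j) ^ 2 := Real.sq_sqrt (by positivity)

lemma frobNorm_smul {a b : Type*} [Fintype a] [Fintype b] (r : ℝ) (A : Matrix a b ℝ) :
    frobNorm (r • A) = |r| * frobNorm A := by
  unfold frobNorm
  rw [← Real.sqrt_sq_eq_abs, ← Real.sqrt_mul (sq_nonneg r)]
  congr 1
  simp [Matrix.smul_apply, mul_pow, Finset.mul_sum]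

lemma frobInner_smul {a b : Type*} [Fintype a] [Fintype b] (r : ℝ) (A B : Matrix a b ℝ) :
    frobInner (r • A) B = r * frobInner A B := by
  simp [frobInner, Finset.mul_sum, Matrix.smul_apply, mul_assoc]

lemma frobInner_sq_le {a b : Type*} [Fintype a] [Fintype b] (W B : Matrix a b ℝ) :
    frobInner W B ^ 2 ≤ frobNorm W ^ 2 * frobNorm B ^ 2 := by
  rw [frobNorm_sq, frobNorm_sq]
  have h1 : frobInner W B = ∑ p ∈ Finset.univ ×ˢ Finset.univ, W p.1 p.2 * B p.1 p.2 := by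
    rw [Finset.sum_product]; rfl
  have h2 : ∑ i, ∑ j, (W i j) ^ 2 = ∑ p ∈ Finset.univ ×ˢ Finset.univ, (W p.1 p.2) ^ 2 := by
    rw [Finset.sum_product]
  have h3 : ∑ i, ∑ j, (B i j) ^ 2 = ∑ p ∈ Finset.univ ×ˢ Finset.univ, (B p.1 p.2) ^ 2 := by
    rw [Finset.sum_product]
  rw [h1, h2, h3]
  exact Finset.sum_mul_sq_le_sq_mul_sq _ _ _

lemma quad_eq {m' n' : Type*} [Fintype m'] [Fintype n'] (B : Matrix m' n' ℝ) (u : m' → ℝ) :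
    ∑ i, u i * ((B * Bᵀ).mulVec u) i = ∑ j, (∑ i, u i * B i j) ^ 2 := by
  have h : ∑ i, u i * ((B * Bᵀ).mulVec u) i = u ⬝ᵥ ((B * Bᵀ) *ᵥ u) := rfl
  rw [h, ← Matrix.mulVec_mulVec, Matrix.dotProduct_mulVec]
  simp only [Matrix.vecMul, Matrix.mulVec, dotProduct, Matrix.transpose_apply, sq]
  refine Finset.sum_congr rfl fun j _ => ?_
  congr 1
  exact Finset.sum_congr rfl fun i _ => mul_comm _ _

lemma quadBound {m' : Type*} [Fintype m'] [DecidableEq m'] (Λ : Matrix m' m' ℝ) (u : m' → ℝ) :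
    ∑ i, u i * (Λ.mulVec u) i ≤ specNorm Λ * ∑ i, (u i) ^ 2 := by
  have hcs := Finset.sum_mul_sq_le_sq_mul_sq Finset.univ u (Λ.mulVec u)
  have h2 := specNorm_mulVec_le Λ u
  have hq : (0:ℝ) ≤ ∑ i, (u i) ^ 2 := by positivity
  have hL : 0 ≤ specNorm Λ := specNorm_nonneg _
  have h3 : ∑ i, (Λ.mulVec u i) ^ 2 ≤ specNorm Λ ^ 2 * ∑ i, (u i) ^ 2 := by
    have := pow_le_pow_left₀ (Real.sqrt_nonneg _) h2 2
    rwa [Real.sq_sqrt (by positivity), mul_pow, Real.sq_sqrt hq] at this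
  nlinarith [hcs, h3, sq_nonneg (∑ i, u i * Λ.mulVec u i - specNorm Λ * ∑ i, (u i)^2),
    mul_nonneg hL hq]

lemma aux_main (d1 d2 T h : ℕ) (hT : 1 ≤ T) (hh : h < T)
    (M : ℕ → Matrix (Fin d1) (Fin d2) ℝ) (S : ℝ) (hS0 : 0 ≤ S)
    (hkeyA : ∀ W : Matrix (Fin d1) (Fin d2) ℝ,
      (1 / (T : ℝ)) * ∑ t ∈ Finset.Icc 1 T, (frobInner W (M t)) ^ 2 ≤ frobNorm W ^ 2 * S) :
    specNorm ((1 / (T : ℝ)) • ∑ t ∈ Finset.Icc (h + 1) T, mat1Kron (M (t - h)) (M t)) ^ 2 ≤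
      specNorm ((1 / (T : ℝ)) • ∑ t ∈ Finset.Icc 1 T, M t * (M t)ᵀ) * S := by
  classical
  set Λ := (1 / (T : ℝ)) • ∑ t ∈ Finset.Icc 1 T, M t * (M t)ᵀ with hΛdef
  set P := ∑ t ∈ Finset.Icc (h + 1) T, mat1Kron (M (t - h)) (M t) with hPdef
  have hT0 : (0:ℝ) < T := by exact_mod_cast Nat.lt_of_lt_of_le Nat.zero_lt_one hT
  have hTne : (T:ℝ) ≠ 0 := ne_of_gt hT0
  have hL : 0 ≤ specNorm Λ := specNorm_nonneg _
  have main : specNorm ((1 / (T : ℝ)) • P) ≤ Real.sqrt (specNorm Λ * S) := by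
    apply specNorm_le_bound _ _ (Real.sqrt_nonneg _)
    intro x
    set u : Fin d1 → ℝ := P.mulVec x with hu
    have hsm : ∀ i, (((1 / (T:ℝ)) • P).mulVec x) i = (1 / (T:ℝ)) * u i := by
      intro i; rw [Matrix.smul_mulVec]; simp [hu]
    set a : ℕ → Fin d2 → ℝ := fun t j1 => ∑ i, u i * M (t - h) i j1 with ha
    set b : ℕ → Fin d2 → ℝ := fun t j1 => frobInner (fun i2 j2 => x (j1, i2, j2)) (M t) with hb
    have hu_sum : ∀ i, u i = ∑ t ∈ Finset.Icc (h+1) T,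
        ∑ p : Fin d2 × Fin d1 × Fin d2, mat1Kron (M (t-h)) (M t) i p * x p := by
      intro i
      have h1 : u i = ∑ p : Fin d2 × Fin d1 × Fin d2,
          (∑ t ∈ Finset.Icc (h+1) T, mat1Kron (M (t-h)) (M t) i p) * x p := by
        simp [hu, hPdef, Matrix.mulVec, dotProduct, Matrix.sum_apply]
      rw [h1]
      simp_rw [Finset.sum_mul]
      rw [Finset.sum_comm]
    have per_t : ∀ t, (∑ i, u i *
          (∑ p : Fin d2 × Fin d1 × Fin d2, mat1Kron (M (t-h)) (M t) i p * x p))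
        = ∑ j1, a t j1 * b t j1 := by
      intro t
      have expand : ∀ i, (∑ p : Fin d2 × Fin d1 × Fin d2, mat1Kron (M (t-h)) (M t) i p * x p)
          = ∑ j1, ∑ i2, ∑ j2, M (t-h) i j1 * M t i2 j2 * x (j1, i2, j2) := by
        intro i; simp [mat1Kron, Fintype.sum_prod_type]
      calc ∑ i, u i * (∑ p : Fin d2 × Fin d1 × Fin d2, mat1Kron (M (t-h)) (M t) i p * x p)
          = ∑ i, ∑ j1, u i * (∑ i2, ∑ j2, M (t-h) i j1 * M t i2 j2 * x (j1, i2, j2)) := by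
            refine Finset.sum_congr rfl fun i _ => ?_
            rw [expand i, Finset.mul_sum]
        _ = ∑ j1, ∑ i, u i * (∑ i2, ∑ j2, M (t-h) i j1 * M t i2 j2 * x (j1, i2, j2)) :=
            Finset.sum_comm
        _ = ∑ j1, a t j1 * b t j1 := by
            refine Finset.sum_congr rfl fun j1 _ => ?_
            have haj : a t j1 = ∑ i, u i * M (t-h) i j1 := rfl
            have hbj : b t j1 = ∑ i2, ∑ j2, x (j1,i2,j2) * M t i2 j2 := rfl
            rw [haj, hbj, Finset.sum_mul]
            refine Finset.sum_congr rfl fun i _ => ?_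
            simp only [Finset.mul_sum]
            exact Finset.sum_congr rfl fun i2 _ => Finset.sum_congr rfl fun j2 _ => by ring
    have hid : ∑ i, (u i)^2 = ∑ t ∈ Finset.Icc (h+1) T, ∑ j1, a t j1 * b t j1 := by
      have step : ∀ i, u i * u i = ∑ t ∈ Finset.Icc (h+1) T,
          u i * (∑ p : Fin d2 × Fin d1 × Fin d2, mat1Kron (M (t-h)) (M t) i p * x p) := by
        intro i; rw [← Finset.mul_sum, ← hu_sum i]
      calc ∑ i, (u i)^2 = ∑ i, u i * u i := by simp [sq]
        _ = ∑ i, ∑ t ∈ Finset.Icc (h+1) T,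
            u i * (∑ p : Fin d2 × Fin d1 × Fin d2, mat1Kron (M (t-h)) (M t) i p * x p) :=
          Finset.sum_congr rfl fun i _ => step i
        _ = ∑ t ∈ Finset.Icc (h+1) T, ∑ i,
            u i * (∑ p : Fin d2 × Fin d1 × Fin d2, mat1Kron (M (t-h)) (M t) i p * x p) :=
          Finset.sum_comm
        _ = ∑ t ∈ Finset.Icc (h+1) T, ∑ j1, a t j1 * b t j1 :=
          Finset.sum_congr rfl fun t _ => per_t t
    set s : Finset (ℕ × Fin d2) := Finset.Icc (h+1) T ×ˢ (Finset.univ : Finset (Fin d2))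
      with hs
    have hcs := Finset.sum_mul_sq_le_sq_mul_sq s (fun q => a q.1 q.2) (fun q => b q.1 q.2)
    have hprod : ∑ q ∈ s, a q.1 q.2 * b q.1 q.2
        = ∑ t ∈ Finset.Icc (h+1) T, ∑ j1, a t j1 * b t j1 := Finset.sum_product _ _ _
    have hprodA : ∑ q ∈ s, (a q.1 q.2)^2
        = ∑ t ∈ Finset.Icc (h+1) T, ∑ j1, (a t j1)^2 := Finset.sum_product _ _ _
    have hprodB : ∑ q ∈ s, (b q.1 q.2)^2
        = ∑ t ∈ Finset.Icc (h+1) T, ∑ j1, (b t j1)^2 := Finset.sum_product _ _ _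
    -- Bound 1
    have hre : ∑ t ∈ Finset.Icc (h+1) T, ∑ j1, (a t j1)^2
        = ∑ t ∈ Finset.Icc 1 (T-h), ∑ j1, (∑ i, u i * M t i j1)^2 := by
      refine Finset.sum_nbij' (fun t => t - h) (fun t => t + h) ?_ ?_ ?_ ?_ ?_
      · intro t ht; simp only [Finset.mem_Icc] at ht ⊢; omega
      · intro t ht; simp only [Finset.mem_Icc] at ht ⊢; omega
      · intro t ht; simp only [Finset.mem_Icc] at ht; omega
      · intro t ht; simp only [Finset.mem_Icc] at ht; omega
      · intro t ht; simp [ha]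
    have hsub : ∑ t ∈ Finset.Icc 1 (T-h), ∑ j1, (∑ i, u i * M t i j1)^2
        ≤ ∑ t ∈ Finset.Icc 1 T, ∑ j1, (∑ i, u i * M t i j1)^2 := by
      apply Finset.sum_le_sum_of_subset_of_nonneg
        (Finset.Icc_subset_Icc_right (Nat.sub_le T h))
      intro t _ _; positivity
    have hmv : ∀ i, (∑ t ∈ Finset.Icc 1 T, M t * (M t)ᵀ).mulVec u i
        = ∑ t ∈ Finset.Icc 1 T, ((M t * (M t)ᵀ).mulVec u) i := by
      intro i
      simp only [Matrix.mulVec, dotProduct, Matrix.sum_apply, Finset.sum_mul]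
      exact Finset.sum_comm
    have hquad : ∑ t ∈ Finset.Icc 1 T, ∑ j1, (∑ i, u i * M t i j1)^2
        = ∑ i, u i * ((∑ t ∈ Finset.Icc 1 T, M t * (M t)ᵀ).mulVec u) i := by
      calc ∑ t ∈ Finset.Icc 1 T, ∑ j1, (∑ i, u i * M t i j1)^2
          = ∑ t ∈ Finset.Icc 1 T, ∑ i, u i * ((M t * (M t)ᵀ).mulVec u) i :=
            Finset.sum_congr rfl fun t _ => (quad_eq (M t) u).symm
        _ = ∑ i, ∑ t ∈ Finset.Icc 1 T, u i * ((M t * (M t)ᵀ).mulVec u) i :=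
            Finset.sum_comm
        _ = ∑ i, u i * ((∑ t ∈ Finset.Icc 1 T, M t * (M t)ᵀ).mulVec u) i := by
            refine Finset.sum_congr rfl fun i _ => ?_
            rw [hmv i, Finset.mul_sum]
    have hΛu : ∑ i, u i * (Λ.mulVec u) i
        = (1/(T:ℝ)) * ∑ i, u i * ((∑ t ∈ Finset.Icc 1 T, M t * (M t)ᵀ).mulVec u) i := by
      rw [Finset.mul_sum]
      refine Finset.sum_congr rfl fun i _ => ?_
      rw [hΛdef, Matrix.smul_mulVec]
      simp only [Pi.smul_apply, smul_eq_mul]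
      ring
    have B1 : ∑ q ∈ s, (a q.1 q.2)^2 ≤ T * (specNorm Λ * ∑ i, (u i)^2) := by
      have h1 : ∑ i, u i * ((∑ t ∈ Finset.Icc 1 T, M t * (M t)ᵀ).mulVec u) i
          = T * ∑ i, u i * (Λ.mulVec u) i := by
        rw [hΛu]; field_simp
      calc ∑ q ∈ s, (a q.1 q.2)^2
          = ∑ t ∈ Finset.Icc (h+1) T, ∑ j1, (a t j1)^2 := hprodA
        _ = ∑ t ∈ Finset.Icc 1 (T-h), ∑ j1, (∑ i, u i * M t i j1)^2 := hre
        _ ≤ ∑ t ∈ Finset.Icc 1 T, ∑ j1, (∑ i, u i * M t i j1)^2 := hsub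
        _ = ∑ i, u i * ((∑ t ∈ Finset.Icc 1 T, M t * (M t)ᵀ).mulVec u) i := hquad
        _ = T * ∑ i, u i * (Λ.mulVec u) i := h1
        _ ≤ T * (specNorm Λ * ∑ i, (u i)^2) :=
            mul_le_mul_of_nonneg_left (quadBound Λ u) (le_of_lt hT0)
    -- Bound 2
    have B2 : ∑ q ∈ s, (b q.1 q.2)^2 ≤ T * (S * ∑ p, (x p)^2) := by
      have hswap : ∑ t ∈ Finset.Icc (h+1) T, ∑ j1, (b t j1)^2
          = ∑ j1, ∑ t ∈ Finset.Icc (h+1) T, (b t j1)^2 := Finset.sum_comm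
      have hsub2 : ∀ j1 : Fin d2, ∑ t ∈ Finset.Icc (h+1) T, (b t j1)^2
          ≤ ∑ t ∈ Finset.Icc 1 T, (b t j1)^2 := by
        intro j1
        apply Finset.sum_le_sum_of_subset_of_nonneg (Finset.Icc_subset_Icc_left (by omega))
        intro t _ _; positivity
      have hk : ∀ j1 : Fin d2, ∑ t ∈ Finset.Icc 1 T, (b t j1)^2
          ≤ T * (frobNorm (fun i2 j2 => x (j1,i2,j2) : Matrix (Fin d1) (Fin d2) ℝ)^2 * S) := by
        intro j1
        have hA := hkeyA (fun i2 j2 => x (j1,i2,j2))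
        have h2 : (T:ℝ) * ((1/(T:ℝ)) * ∑ t ∈ Finset.Icc 1 T, (b t j1)^2)
            = ∑ t ∈ Finset.Icc 1 T, (b t j1)^2 := by field_simp
        calc ∑ t ∈ Finset.Icc 1 T, (b t j1)^2
            = (T:ℝ) * ((1/(T:ℝ)) * ∑ t ∈ Finset.Icc 1 T, (b t j1)^2) := h2.symm
          _ ≤ T * (frobNorm (fun i2 j2 => x (j1,i2,j2) : Matrix (Fin d1) (Fin d2) ℝ)^2 * S) :=
              mul_le_mul_of_nonneg_left hA (le_of_lt hT0)
      have hxsum : ∑ j1 : Fin d2,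
          frobNorm (fun i2 j2 => x (j1,i2,j2) : Matrix (Fin d1) (Fin d2) ℝ)^2
          = ∑ p, (x p)^2 := by
        have hfs : ∀ j1 : Fin d2, frobNorm (fun i2 j2 => x (j1,i2,j2) : Matrix (Fin d1) (Fin d2) ℝ)^2
            = ∑ i2, ∑ j2, (x (j1,i2,j2))^2 := fun j1 => frobNorm_sq _
        rw [Finset.sum_congr rfl fun j1 _ => hfs j1]
        simp [Fintype.sum_prod_type]
      have hfold : ∑ j1 : Fin d2,
          (T:ℝ) * (frobNorm (fun i2 j2 => x (j1,i2,j2) : Matrix (Fin d1) (Fin d2) ℝ)^2 * S)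
          = T * (S * ∑ p, (x p)^2) := by
        rw [← hxsum, Finset.mul_sum]
        rw [Finset.mul_sum]
        exact Finset.sum_congr rfl fun j1 _ => by ring
      calc ∑ q ∈ s, (b q.1 q.2)^2
          = ∑ t ∈ Finset.Icc (h+1) T, ∑ j1, (b t j1)^2 := hprodB
        _ = ∑ j1, ∑ t ∈ Finset.Icc (h+1) T, (b t j1)^2 := hswap
        _ ≤ ∑ j1, ∑ t ∈ Finset.Icc 1 T, (b t j1)^2 :=
            Finset.sum_le_sum fun j1 _ => hsub2 j1
        _ ≤ ∑ j1 : Fin d2,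
            (T:ℝ) * (frobNorm (fun i2 j2 => x (j1,i2,j2) : Matrix (Fin d1) (Fin d2) ℝ)^2 * S) :=
            Finset.sum_le_sum fun j1 _ => hk j1
        _ = T * (S * ∑ p, (x p)^2) := hfold
    have hfin : (∑ i, (u i)^2)^2
        ≤ (T * (specNorm Λ * ∑ i, (u i)^2)) * (T * (S * ∑ p, (x p)^2)) := by
      calc (∑ i, (u i)^2)^2 = (∑ q ∈ s, a q.1 q.2 * b q.1 q.2)^2 := by rw [hid, ← hprod]
        _ ≤ (∑ q ∈ s, (a q.1 q.2)^2) * (∑ q ∈ s, (b q.1 q.2)^2) := hcs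
        _ ≤ _ := mul_le_mul B1 B2 (Finset.sum_nonneg fun q _ => sq_nonneg _)
            (mul_nonneg hT0.le (mul_nonneg hL (Finset.sum_nonneg fun i _ => sq_nonneg _)))
    -- conclude
    rw [← Real.sqrt_mul (mul_nonneg hL hS0)]
    apply Real.sqrt_le_sqrt
    have hexp : ∑ i, ((((1 / (T:ℝ)) • P).mulVec x) i)^2 = (1/(T:ℝ))^2 * ∑ i, (u i)^2 := by
      simp_rw [hsm, mul_pow]
      rw [← Finset.mul_sum]
    rw [hexp]
    by_cases hq : ∑ i, (u i)^2 = 0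
    · rw [hq, mul_zero]
      have : (0:ℝ) ≤ ∑ j, (x j)^2 := by positivity
      have := mul_nonneg (mul_nonneg hL hS0) this
      linarith
    · have hqnn : (0:ℝ) ≤ ∑ i, (u i)^2 := by positivity
      have hqpos : (0:ℝ) < ∑ i, (u i)^2 := lt_of_le_of_ne hqnn (Ne.symm hq)
      have h1 : (∑ i, (u i)^2) * (∑ i, (u i)^2)
          ≤ ((T:ℝ)^2 * (specNorm Λ * S * ∑ j, (x j)^2)) * (∑ i, (u i)^2) := by
        calc (∑ i, (u i)^2) * (∑ i, (u i)^2) = (∑ i, (u i)^2)^2 := (sq _).symm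
          _ ≤ (T * (specNorm Λ * ∑ i, (u i)^2)) * (T * (S * ∑ p, (x p)^2)) := hfin
          _ = ((T:ℝ)^2 * (specNorm Λ * S * ∑ j, (x j)^2)) * (∑ i, (u i)^2) := by ring
      have h2 := le_of_mul_le_mul_right h1 hqpos
      have h3 : (1/(T:ℝ))^2 * ((T:ℝ)^2 * (specNorm Λ * S * ∑ j, (x j)^2))
          = specNorm Λ * S * ∑ j, (x j)^2 := by
        field_simp
      calc (1/(T:ℝ))^2 * ∑ i, (u i)^2
          ≤ (1/(T:ℝ))^2 * ((T:ℝ)^2 * (specNorm Λ * S * ∑ j, (x j)^2)) :=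
            mul_le_mul_of_nonneg_left h2 (by positivity)
        _ = specNorm Λ * S * ∑ j, (x j)^2 := h3
  calc specNorm ((1 / (T : ℝ)) • P) ^ 2 ≤ Real.sqrt (specNorm Λ * S) ^ 2 :=
      pow_le_pow_left₀ (specNorm_nonneg _) main 2
    _ = specNorm Λ * S := Real.sq_sqrt (mul_nonneg hL hS0)

/-- Lemma on the TOPUP norm: for matrices M₁,…,M_T ∈ ℝ^{d1×d2} and a lag
0 ≤ h < T,
‖(1/T)·Σ_{t=h+1}^{T} mat₁(M_{t−h} ⊗ M_t)‖₂²
  ≤ ‖(1/T)·Σ_{t=1}^{T} M_tM_tᵀ‖₂ · sup{ (1/T)·Σ_{t=1}^{T} ⟨W, M_t⟩_F² : ‖W‖_F ≤ 1 }. -/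
theorem stmt8 (d1 d2 T h : ℕ) (hT : 1 ≤ T) (hh : h < T)
    (M : ℕ → Matrix (Fin d1) (Fin d2) ℝ) :
    specNorm ((1 / (T : ℝ)) • ∑ t ∈ Finset.Icc (h + 1) T, mat1Kron (M (t - h)) (M t)) ^ 2 ≤
      specNorm ((1 / (T : ℝ)) • ∑ t ∈ Finset.Icc 1 T, M t * (M t)ᵀ) *
        sSup { x : ℝ | ∃ W : Matrix (Fin d1) (Fin d2) ℝ, frobNorm W ≤ 1 ∧
          x = (1 / (T : ℝ)) * ∑ t ∈ Finset.Icc 1 T, (frobInner W (M t)) ^ 2 } := by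
  classical
  set SS : Set ℝ := { x : ℝ | ∃ W : Matrix (Fin d1) (Fin d2) ℝ, frobNorm W ≤ 1 ∧
      x = (1 / (T : ℝ)) * ∑ t ∈ Finset.Icc 1 T, (frobInner W (M t)) ^ 2 } with hSS
  have hT0 : (0:ℝ) < T := by exact_mod_cast Nat.lt_of_lt_of_le Nat.zero_lt_one hT
  have hmem0 : (0:ℝ) ∈ SS := by
    refine ⟨0, by simp [frobNorm], ?_⟩
    simp [frobInner]
  have hbdd : BddAbove SS := by
    refine ⟨(1/(T:ℝ)) * ∑ t ∈ Finset.Icc 1 T, frobNorm (M t) ^ 2, ?_⟩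
    rintro x ⟨W, hW, rfl⟩
    apply mul_le_mul_of_nonneg_left ?_ (by positivity)
    apply Finset.sum_le_sum
    intro t _
    have h1 := frobInner_sq_le W (M t)
    have h2 : frobNorm W ^ 2 ≤ 1 := by
      have := frobNorm_nonneg W; nlinarith
    have h3 : (0:ℝ) ≤ frobNorm (M t) ^ 2 := sq_nonneg _
    nlinarith
  have hS0 : (0:ℝ) ≤ sSup SS := le_csSup hbdd hmem0
  have hkeyA : ∀ W : Matrix (Fin d1) (Fin d2) ℝ,
      (1 / (T : ℝ)) * ∑ t ∈ Finset.Icc 1 T, (frobInner W (M t)) ^ 2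
        ≤ frobNorm W ^ 2 * sSup SS := by
    intro W
    by_cases hW0 : frobNorm W = 0
    · have hsum : ∑ i, ∑ j, (W i j) ^ 2 = 0 := by
        have := frobNorm_sq W
        rw [hW0] at this
        simpa using this.symm
      have hzero : ∀ i j, W i j = 0 := by
        intro i j
        have h1 := (Finset.sum_eq_zero_iff_of_nonneg
          (fun i _ => Finset.sum_nonneg fun j _ => sq_nonneg (W i j))).mp hsum i
          (Finset.mem_univ i)
        have h2 := (Finset.sum_eq_zero_iff_of_nonneg
          (fun j _ => sq_nonneg (W i j))).mp h1 j (Finset.mem_univ j)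
        exact pow_eq_zero_iff (n := 2) (by norm_num) |>.mp h2
      have hfi : ∀ t, frobInner W (M t) = 0 := fun t =>
        Finset.sum_eq_zero fun i _ => Finset.sum_eq_zero fun j _ => by
          rw [hzero i j]; ring
      simp [hfi, hW0]
    · have hWpos : 0 < frobNorm W := lt_of_le_of_ne (frobNorm_nonneg W) (Ne.symm hW0)
      have hmem : (1/(T:ℝ)) * ∑ t ∈ Finset.Icc 1 T,
          (frobInner ((frobNorm W)⁻¹ • W) (M t)) ^ 2 ∈ SS := by
        refine ⟨(frobNorm W)⁻¹ • W, ?_, rfl⟩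
        rw [frobNorm_smul, abs_of_pos (inv_pos.2 hWpos), inv_mul_cancel₀ (ne_of_gt hWpos)]
      have hle := le_csSup hbdd hmem
      have hc2 : (1/(T:ℝ)) * ∑ t ∈ Finset.Icc 1 T,
          (frobInner ((frobNorm W)⁻¹ • W) (M t)) ^ 2
          = ((frobNorm W)⁻¹) ^ 2 *
            ((1/(T:ℝ)) * ∑ t ∈ Finset.Icc 1 T, (frobInner W (M t)) ^ 2) := by
        simp_rw [frobInner_smul, mul_pow]
        rw [← Finset.mul_sum]
        ring
      rw [hc2] at hle
      have hne : frobNorm W ≠ 0 := ne_of_gt hWpos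
      calc (1/(T:ℝ)) * ∑ t ∈ Finset.Icc 1 T, (frobInner W (M t)) ^ 2
          = frobNorm W ^ 2 * (((frobNorm W)⁻¹) ^ 2 *
            ((1/(T:ℝ)) * ∑ t ∈ Finset.Icc 1 T, (frobInner W (M t)) ^ 2)) := by
            field_simp
        _ ≤ frobNorm W ^ 2 * sSup SS :=
            mul_le_mul_of_nonneg_left hle (sq_nonneg _)
  exact aux_main d1 d2 T h hT hh M (sSup SS) hS0 hkeyA
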